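/- Let f : ℝ → (0,∞) be a non-decreasing function satisfying lim_{x→∞} f(−x)/f(x) = 0, let ε ∈ (0,1), let n ≥ 1 be an integer, and let w : ℝⁿ → (0,∞). Define c(p,x) = f(p·x). Then there is a set P ⊂ ℝⁿ of exactly n points such that every ε-coreset (Q,u) of (P, w, ℝⁿ, c), with Q ⊆ P and u : Q → (0,∞), satisfies Q = P. -/

import Mathlib

open scoped RealInnerProductSpace

theorem lower_bound_no_small_coreset
    (f : ℝ → ℝ) (hfpos : ∀ z, 0 < f z) (hfmono : Monotone f)
    (hlim : Filter.Tendsto (fun x : ℝ => f (-x) / f x) Filter.atTop (nhds 0))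
    (ε : ℝ) (hε : ε ∈ Set.Ioo (0 : ℝ) 1) (n : ℕ) (hn : 1 ≤ n)
    (w : EuclideanSpace ℝ (Fin n) → ℝ) (hw : ∀ p, 0 < w p) :
    ∃ P : Finset (EuclideanSpace ℝ (Fin n)), P.card = n ∧
      ∀ Q : Finset (EuclideanSpace ℝ (Fin n)), Q ⊆ P →
        ∀ u : EuclideanSpace ℝ (Fin n) → ℝ, (∀ q ∈ Q, 0 < u q) →
          (∀ x : EuclideanSpace ℝ (Fin n),
            |(∑ p ∈ P, w p * f ⟪p, x⟫) - ∑ q ∈ Q, u q * f ⟪q, x⟫| ≤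
              ε * ∑ p ∈ P, w p * f ⟪p, x⟫) →
      Q = P := by
  classical
  set s : Fin n → EuclideanSpace ℝ (Fin n) := fun i => EuclideanSpace.single i 1 with hs
  have hsinj : Function.Injective s := by
    intro a b hab
    by_contra hne
    have h := congrArg (fun v : EuclideanSpace ℝ (Fin n) => v a) hab
    simp [hs, EuclideanSpace.single_apply, hne] at h
  refine ⟨Finset.univ.image s, ?_, ?_⟩
  · rw [Finset.card_image_of_injective _ hsinj, Finset.card_univ, Fintype.card_fin]
  intro Q hQ u hu hcore
  apply Finset.Subset.antisymm hQ
  intro p hp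
  simp only [Finset.mem_image, Finset.mem_univ, true_and] at hp
  obtain ⟨i, rfl⟩ := hp
  by_contra hqi
  set U : ℝ := ∑ q ∈ Q, u q with hU
  have hUnn : 0 ≤ U := Finset.sum_nonneg fun q hq => (hu q hq).le
  have hwi : 0 < w (s i) := hw _
  have hε1 : ε < 1 := hε.2
  have h1ε : 0 < 1 - ε := by linarith
  have hδ : 0 < (1 - ε) * w (s i) / (U + 1) := by positivity
  obtain ⟨M, hM⟩ := (hlim.eventually (gt_mem_nhds hδ)).exists
  set x : EuclideanSpace ℝ (Fin n) := WithLp.toLp 2 (fun j => if j = i then M else -M) with hx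
  have key : ∀ j : Fin n, ⟪s j, x⟫ = x j := by
    intro j
    simp [hs, EuclideanSpace.inner_single_left]
  have hxi : ⟪s i, x⟫ = M := by rw [key]; simp [hx]
  have hCQ : ∑ q ∈ Q, u q * f ⟪q, x⟫ = U * f (-M) := by
    rw [hU, Finset.sum_mul]
    refine Finset.sum_congr rfl fun q hq => ?_
    obtain ⟨j, -, rfl⟩ := Finset.mem_image.mp (hQ hq)
    have hji : j ≠ i := by rintro rfl; exact hqi hq
    have hj : ⟪s j, x⟫ = -M := by rw [key]; simp [hx, hji]
    rw [hj]
  have hCP : w (s i) * f M ≤ ∑ p ∈ Finset.univ.image s, w p * f ⟪p, x⟫ := by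
    rw [← hxi]
    exact Finset.single_le_sum (f := fun p => w p * f ⟪p, x⟫)
      (fun p _ => mul_nonneg (hw p).le (hfpos _).le)
      (Finset.mem_image_of_mem s (Finset.mem_univ i))
  have hfM : 0 < f M := hfpos M
  have hratio : f (-M) / f M < (1 - ε) * w (s i) / (U + 1) := hM
  have hfNeg : U * f (-M) < (1 - ε) * (w (s i) * f M) := by
    have h1 : f (-M) < ((1 - ε) * w (s i) / (U + 1)) * f M := (div_lt_iff₀ hfM).mp hratio
    have h2 : U * f (-M) ≤ (U + 1) * f (-M) := by nlinarith [(hfpos (-M)).le]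
    calc U * f (-M) ≤ (U + 1) * f (-M) := h2
      _ < (U + 1) * (((1 - ε) * w (s i) / (U + 1)) * f M) := by
          apply mul_lt_mul_of_pos_left h1; linarith
      _ = (1 - ε) * (w (s i) * f M) := by
          field_simp
  have habs := abs_le.mp (hcore x)
  rw [hCQ] at habs
  have hprod : (1 - ε) * (w (s i) * f M) ≤
      (1 - ε) * ∑ p ∈ Finset.univ.image s, w p * f ⟪p, x⟫ :=
    mul_le_mul_of_nonneg_left hCP (by linarith)
  linarith [habs.2]
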